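/- Let C be a standard Cauchy variable and ε an independent Rademacher variable. For every x, y ∈ ℝ, sinh(arcsinh(C cosh x) + yε) has the same distribution as C cosh(x + yε). -/

import Mathlib

open MeasureTheory Real Set ProbabilityTheory
open scoped ENNReal


lemma arctan_pair_lt {u v u' v' : ℝ} (h : u * v < 1) (h' : u' * v' < 1)
    (hq : (u + v) / (1 - u * v) = (u' + v') / (1 - u' * v')) :
    arctan u + arctan v = arctan u' + arctan v' := by
  rw [arctan_add h, arctan_add h', hq]

lemma arctan_pair_gt {u v u' v' : ℝ} (h : 1 < u * v) (h' : 1 < u' * v')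
    (hu : 0 < u) (hu' : 0 < u')
    (hq : (u + v) / (1 - u * v) = (u' + v') / (1 - u' * v')) :
    arctan u + arctan v = arctan u' + arctan v' := by
  rw [arctan_add_eq_add_pi h hu, arctan_add_eq_add_pi h' hu', hq]

lemma arctan_pair_gt_neg {u v u' v' : ℝ} (h : 1 < u * v) (h' : 1 < u' * v')
    (hu : u < 0) (hu' : u' < 0)
    (hq : (u + v) / (1 - u * v) = (u' + v') / (1 - u' * v')) :
    arctan u + arctan v = arctan u' + arctan v' := by
  rw [arctan_add_eq_sub_pi h hu, arctan_add_eq_sub_pi h' hu', hq]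

lemma arctan_pair_one {u u' : ℝ} (hu : 0 < u) (hu' : 0 < u') :
    arctan u + arctan u⁻¹ = arctan u' + arctan u'⁻¹ := by
  rw [arctan_inv_of_pos hu, arctan_inv_of_pos hu']; ring

lemma arctan_pair_one_neg {u u' : ℝ} (hu : u < 0) (hu' : u' < 0) :
    arctan u + arctan u⁻¹ = arctan u' + arctan u'⁻¹ := by
  rw [arctan_inv_of_neg hu, arctan_inv_of_neg hu']; ring

set_option maxHeartbeats 1000000 in
lemma arctan_sum_aux (x y t : ℝ) :
    arctan ((t * cosh y - Real.sqrt (1 + t ^ 2) * sinh y) / cosh x)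
      + arctan ((t * cosh y + Real.sqrt (1 + t ^ 2) * sinh y) / cosh x)
    = arctan (t / cosh (x + y)) + arctan (t / cosh (x - y)) := by
  have h1t : (0:ℝ) < 1 + t ^ 2 := by positivity
  set r := Real.sqrt (1 + t ^ 2) with hrdef
  have hr : r ^ 2 = 1 + t ^ 2 := Real.sq_sqrt h1t.le
  have hr0 : 0 < r := Real.sqrt_pos.2 h1t
  set cx := cosh x with hcxd
  set sx := sinh x with hsxd
  set cy := cosh y with hcyd
  set sy := sinh y with hsyd
  have hcx : cx ^ 2 = 1 + sx ^ 2 := by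
    rw [hcxd, hsxd, Real.cosh_sq]; ring
  have hcy : cy ^ 2 = 1 + sy ^ 2 := by
    rw [hcyd, hsyd, Real.cosh_sq]; ring
  have hcx0 : 0 < cx := cosh_pos x
  have hcy0 : 0 < cy := cosh_pos y
  have hkp : cosh (x + y) = cx * cy + sx * sy := Real.cosh_add x y
  have hkm : cosh (x - y) = cx * cy - sx * sy := Real.cosh_sub x y
  have hkp0 : 0 < cx * cy + sx * sy := hkp ▸ cosh_pos (x+y)
  have hkm0 : 0 < cx * cy - sx * sy := hkm ▸ cosh_pos (x-y)
  rw [hkp, hkm]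
  set u := (t * cy - r * sy) / cx with hud
  set v := (t * cy + r * sy) / cx with hvd
  set u' := t / (cx * cy + sx * sy) with hu'd
  set v' := t / (cx * cy - sx * sy) with hv'd
  have hK : (cx * cy + sx * sy) * (cx * cy - sx * sy) = cx ^ 2 + sy ^ 2 := by
    linear_combination cx ^ 2 * hcy + sy ^ 2 * hcx
  have huv : u * v = (t ^ 2 - sy ^ 2) / cx ^ 2 := by
    rw [hud, hvd]
    field_simp
    linear_combination (-(sy^2))*hr + (t^2)*hcy
  have hu'v' : u' * v' = t ^ 2 / (cx ^ 2 + sy ^ 2) := by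
    rw [hu'd, hv'd, div_mul_div_comm, hK]; ring
  have hCS : (0:ℝ) < cx ^ 2 + sy ^ 2 := by positivity
  have hquot : t ^ 2 ≠ cx ^ 2 + sy ^ 2 →
      (u + v) / (1 - u * v) = (u' + v') / (1 - u' * v') := by
    intro hne
    rw [huv, hu'v', hud, hvd, hu'd, hv'd]
    have h1 : cx ^ 2 - (t ^ 2 - sy ^ 2) ≠ 0 := by
      intro h; exact hne (by linarith)
    have h2 : (cx ^ 2 + sy ^ 2) - t ^ 2 ≠ 0 := fun h => hne (by linarith)
    have hkp' : cy * cx + sy * sx ≠ 0 := by rw [mul_comm cy, mul_comm sy]; exact hkp0.ne'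
    have hkm' : cy * cx - sy * sx ≠ 0 := by rw [mul_comm cy, mul_comm sy]; exact hkm0.ne'
    field_simp
    linear_combination (2*t*cy*cx*(cx^2+sy^2-t^2))*hK
  have hsum : u + v = 2 * t * cy / cx := by
    rw [hud, hvd, ← add_div]; ring_nf
  rcases lt_trichotomy (t ^ 2) (cx ^ 2 + sy ^ 2) with hlt | heq | hgt
  · refine arctan_pair_lt ?_ ?_ (hquot hlt.ne)
    · rw [huv, div_lt_one (by positivity)]; linarith
    · rw [hu'v', div_lt_one hCS]; linarith
  · have ht0 : t ≠ 0 := by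
      intro h; rw [h] at heq; nlinarith
    have huv1 : u * v = 1 := by
      rw [huv, heq]; field_simp; ring
    have hu'v1 : u' * v' = 1 := by
      rw [hu'v', heq, div_self (by positivity)]
    have hune : u ≠ 0 := by intro h0; rw [h0, zero_mul] at huv1; norm_num at huv1
    have hu'ne : u' ≠ 0 := by intro h0; rw [h0, zero_mul] at hu'v1; norm_num at hu'v1
    have hv : v = u⁻¹ := eq_inv_of_mul_eq_one_right huv1
    have hv' : v' = u'⁻¹ := eq_inv_of_mul_eq_one_right hu'v1
    rw [hv, hv']
    rcases ht0.lt_or_gt with htneg | htpos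
    · have hu'0 : u' < 0 := div_neg_of_neg_of_pos htneg hkp0
      have hu0 : u < 0 := by
        rcases hune.lt_or_gt with h | h
        · exact h
        · exfalso
          have hv0 : 0 < v := by rw [hv]; exact inv_pos.2 h
          have : 2 * t * cy / cx < 0 := by
            apply div_neg_of_neg_of_pos _ hcx0; nlinarith
          rw [← hsum] at this; linarith
      exact arctan_pair_one_neg hu0 hu'0
    · have hu'0 : 0 < u' := div_pos htpos hkp0
      have hu0 : 0 < u := by
        rcases hune.lt_or_gt with h | h
        · exfalso
          have hv0 : v < 0 := by rw [hv]; exact inv_neg''.2 h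
          have : 0 < 2 * t * cy / cx := by positivity
          rw [← hsum] at this; linarith
        · exact h
      exact arctan_pair_one hu0 hu'0
  · have h1 : 1 < u * v := by
      rw [huv, one_lt_div (by positivity : (0:ℝ) < cx ^ 2)]; linarith
    have h1' : 1 < u' * v' := by
      rw [hu'v', one_lt_div hCS]; linarith
    have ht0 : t ≠ 0 := by
      intro h; rw [h] at hgt; nlinarith
    rcases ht0.lt_or_gt with htneg | htpos
    · have hu'0 : u' < 0 := div_neg_of_neg_of_pos htneg hkp0
      have hu0 : u < 0 := by
        by_contra h
        push_neg at h
        have hune : u ≠ 0 := by intro h0; rw [h0, zero_mul] at h1; norm_num at h1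
        have hupos : 0 < u := lt_of_le_of_ne h (Ne.symm hune)
        have hvpos : 0 < v := by nlinarith
        have : 2 * t * cy / cx < 0 := by
          apply div_neg_of_neg_of_pos _ hcx0; nlinarith
        rw [← hsum] at this; linarith
      exact arctan_pair_gt_neg h1 h1' hu0 hu'0 (hquot hgt.ne')
    · have hu'0 : 0 < u' := div_pos htpos hkp0
      have hu0 : 0 < u := by
        by_contra h
        push_neg at h
        have hune : u ≠ 0 := by intro h0; rw [h0, zero_mul] at h1; norm_num at h1
        have huneg : u < 0 := lt_of_le_of_ne h hune
        have hvneg : v < 0 := by nlinarith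
        have : 0 < 2 * t * cy / cx := by positivity
        rw [← hsum] at this; linarith
      exact arctan_pair_gt h1 h1' hu0 hu'0 (hquot hgt.ne')


lemma my_prod_smul_right {α β : Type*} [MeasurableSpace α] [MeasurableSpace β]
    (μ : Measure α) [SFinite μ] (ν : Measure β) [SFinite ν] (c : ℝ≥0∞) (hc : c ≠ ⊤) :
    μ.prod (c • ν) = c • μ.prod ν := by
  ext s hs
  rw [Measure.smul_apply, smul_eq_mul, Measure.prod_apply hs, Measure.prod_apply hs,
    ← lintegral_const_mul' _ _ hc]
  simp [Measure.smul_apply]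

lemma cauchy_Iic (b : ℝ) :
    (volume.withDensity (fun x => ENNReal.ofReal (1 / (π * (1 + x ^ 2))))) (Iic b)
      = ENNReal.ofReal (arctan b / π + 1 / 2) := by
  have hπ := Real.pi_pos
  have hint : Integrable (fun x : ℝ => 1 / (π * (1 + x ^ 2))) := by
    have := integrable_inv_one_add_sq.const_mul π⁻¹
    refine this.congr (Filter.Eventually.of_forall fun x => ?_)
    simp [one_div, mul_inv, mul_comm]
  rw [withDensity_apply _ measurableSet_Iic,
    ← ofReal_integral_eq_lintegral_ofReal hint.integrableOn
      (Filter.Eventually.of_forall fun x => by positivity)]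
  congr 1
  have h : ∀ x : ℝ, 1 / (π * (1 + x ^ 2)) = π⁻¹ * (1 + x ^ 2)⁻¹ := fun x => by
    rw [one_div, mul_inv]
  simp_rw [h]
  rw [MeasureTheory.integral_const_mul, integral_Iic_inv_one_add_sq]
  field_simp

lemma cdf_nonneg (b : ℝ) : 0 ≤ arctan b / π + 1 / 2 := by
  have h := Real.neg_pi_div_two_lt_arctan b
  have hπ := Real.pi_pos
  have h2 : -(π / 2) / π ≤ arctan b / π := by gcongr
  have h3 : -(π / 2) / π = -(1 / 2) := by field_simp
  linarith

lemma pre_sinh (x s a : ℝ) :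
    (fun c : ℝ => Real.sinh (Real.arsinh (c * Real.cosh x) + s)) ⁻¹' (Iic a)
      = Iic (Real.sinh (Real.arsinh a - s) / Real.cosh x) := by
  ext c
  simp only [mem_preimage, mem_Iic]
  constructor
  · intro h
    rw [le_div_iff₀ (Real.cosh_pos x)]
    have h1 : Real.arsinh (c * Real.cosh x) + s ≤ Real.arsinh a := by
      have := Real.arsinh_le_arsinh.2 h
      rwa [Real.arsinh_sinh] at this
    calc c * Real.cosh x = Real.sinh (Real.arsinh (c * Real.cosh x)) := (Real.sinh_arsinh _).symm
      _ ≤ Real.sinh (Real.arsinh a - s) := Real.sinh_le_sinh.2 (by linarith)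
  · intro h
    have h1 : c * Real.cosh x ≤ Real.sinh (Real.arsinh a - s) :=
      (le_div_iff₀ (Real.cosh_pos x)).1 h
    have h2 : Real.arsinh (c * Real.cosh x) ≤ Real.arsinh a - s := by
      have := Real.arsinh_le_arsinh.2 h1
      rwa [Real.arsinh_sinh] at this
    calc Real.sinh (Real.arsinh (c * Real.cosh x) + s)
        ≤ Real.sinh (Real.arsinh a) := Real.sinh_le_sinh.2 (by linarith)
      _ = a := Real.sinh_arsinh a

lemma pre_mul {k : ℝ} (hk : 0 < k) (a : ℝ) :
    (fun c : ℝ => c * k) ⁻¹' (Iic a) = Iic (a / k) := by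
  ext c
  simp [mem_Iic, le_div_iff₀ hk]

set_option maxHeartbeats 1000000 in
theorem stmt_12 {Ω : Type*} [MeasurableSpace Ω] (P : Measure Ω) [IsProbabilityMeasure P]
    (C ε : Ω → ℝ) (hC : Measurable C) (hε : Measurable ε)
    (hCauchy : P.map C = volume.withDensity (fun x => ENNReal.ofReal (1 / (π * (1 + x ^ 2)))))
    (hRad : P.map ε = ((1:ℝ≥0∞)/2) • Measure.dirac (1:ℝ) + ((1:ℝ≥0∞)/2) • Measure.dirac (-1:ℝ))
    (hindep : IndepFun C ε P)
    (x y : ℝ) :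
    P.map (fun ω => Real.sinh (Real.arsinh (C ω * Real.cosh x) + y * ε ω))
      = P.map (fun ω => C ω * Real.cosh (x + y * ε ω)) := by
  have hpair : Measurable fun ω => (C ω, ε ω) := hC.prodMk hε
  set μ : Measure ℝ := volume.withDensity (fun x => ENNReal.ofReal (1 / (π * (1 + x ^ 2))))
    with hμdef
  haveI hμprob : IsProbabilityMeasure μ := by
    rw [← hCauchy]
    exact Measure.isProbabilityMeasure_map hC.aemeasurable
  have hF : Measurable fun p : ℝ × ℝ => Real.sinh (Real.arsinh (p.1 * Real.cosh x) + y * p.2) :=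
    (Real.continuous_sinh.comp ((Real.continuous_arsinh.comp
      (continuous_fst.mul continuous_const)).add (continuous_const.mul continuous_snd))).measurable
  have hG : Measurable fun p : ℝ × ℝ => p.1 * Real.cosh (x + y * p.2) :=
    (continuous_fst.mul (Real.continuous_cosh.comp
      (continuous_const.add (continuous_const.mul continuous_snd)))).measurable
  have hjoint : P.map (fun ω => (C ω, ε ω)) = μ.prod (P.map ε) := by
    rw [← hCauchy]
    exact (indepFun_iff_map_prod_eq_prod_map_map hC.aemeasurable hε.aemeasurable).1 hindep
  have key : ∀ F : ℝ × ℝ → ℝ, Measurable F →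
      P.map (fun ω => F (C ω, ε ω)) =
        ((1 : ℝ≥0∞) / 2) • μ.map (fun c => F (c, 1)) +
          ((1 : ℝ≥0∞) / 2) • μ.map (fun c => F (c, -1)) := by
    intro F hFm
    have h1 : P.map (fun ω => F (C ω, ε ω)) = (μ.prod (P.map ε)).map F := by
      rw [← hjoint]
      exact (Measure.map_map hFm hpair).symm
    rw [h1, hRad, Measure.prod_add,
      my_prod_smul_right _ _ _ (by norm_num), my_prod_smul_right _ _ _ (by norm_num),
      Measure.prod_dirac, Measure.prod_dirac,
      Measure.map_add _ _ hFm, Measure.map_smul, Measure.map_smul,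
      Measure.map_map hFm measurable_prodMk_right,
      Measure.map_map hFm measurable_prodMk_right]
    rfl
  have hf1 : Measurable fun c : ℝ => Real.sinh (Real.arsinh (c * Real.cosh x) + y * (1:ℝ)) :=
    (Real.continuous_sinh.comp ((Real.continuous_arsinh.comp
      (continuous_id.mul continuous_const)).add continuous_const)).measurable
  have hf2 : Measurable fun c : ℝ => Real.sinh (Real.arsinh (c * Real.cosh x) + y * (-1:ℝ)) :=
    (Real.continuous_sinh.comp ((Real.continuous_arsinh.comp
      (continuous_id.mul continuous_const)).add continuous_const)).measurable
  have hg1 : Measurable fun c : ℝ => c * Real.cosh (x + y * (1:ℝ)) :=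
    (continuous_id.mul continuous_const).measurable
  have hg2 : Measurable fun c : ℝ => c * Real.cosh (x + y * (-1:ℝ)) :=
    (continuous_id.mul continuous_const).measurable
  have e1 : P.map (fun ω => Real.sinh (Real.arsinh (C ω * Real.cosh x) + y * ε ω))
      = ((1 : ℝ≥0∞) / 2) • μ.map (fun c : ℝ => Real.sinh (Real.arsinh (c * Real.cosh x) + y * (1:ℝ)))
        + ((1 : ℝ≥0∞) / 2) • μ.map (fun c : ℝ =>
            Real.sinh (Real.arsinh (c * Real.cosh x) + y * (-1:ℝ))) := key _ hF
  have e2 : P.map (fun ω => C ω * Real.cosh (x + y * ε ω))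
      = ((1 : ℝ≥0∞) / 2) • μ.map (fun c : ℝ => c * Real.cosh (x + y * (1:ℝ)))
        + ((1 : ℝ≥0∞) / 2) • μ.map (fun c : ℝ => c * Real.cosh (x + y * (-1:ℝ))) := key _ hG
  rw [e1, e2]
  haveI i1 : IsProbabilityMeasure
      (μ.map fun c : ℝ => Real.sinh (Real.arsinh (c * Real.cosh x) + y * (1:ℝ))) :=
    Measure.isProbabilityMeasure_map hf1.aemeasurable
  haveI i2 : IsProbabilityMeasure
      (μ.map fun c : ℝ => Real.sinh (Real.arsinh (c * Real.cosh x) + y * (-1:ℝ))) :=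
    Measure.isProbabilityMeasure_map hf2.aemeasurable
  haveI ifin : IsFiniteMeasure
      (((1 : ℝ≥0∞) / 2) • (μ.map fun c : ℝ => Real.sinh (Real.arsinh (c * Real.cosh x) + y * (1:ℝ)))
        + ((1 : ℝ≥0∞) / 2) • (μ.map fun c : ℝ =>
            Real.sinh (Real.arsinh (c * Real.cosh x) + y * (-1:ℝ)))) := by
    refine ⟨?_⟩
    rw [Measure.add_apply, Measure.smul_apply, Measure.smul_apply, smul_eq_mul, smul_eq_mul,
      measure_univ, measure_univ, mul_one, ENNReal.add_halves]
    exact ENNReal.one_lt_top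
  refine Measure.ext_of_Iic _ _ fun a => ?_
  simp only [Measure.add_apply, Measure.smul_apply, smul_eq_mul]
  rw [Measure.map_apply hf1 measurableSet_Iic, Measure.map_apply hf2 measurableSet_Iic,
    Measure.map_apply hg1 measurableSet_Iic, Measure.map_apply hg2 measurableSet_Iic,
    pre_sinh, pre_sinh, pre_mul (Real.cosh_pos _), pre_mul (Real.cosh_pos _), hμdef,
    cauchy_Iic, cauchy_Iic, cauchy_Iic, cauchy_Iic]
  have h2 : ((1:ℝ≥0∞)/2) = ENNReal.ofReal (1/2) := by
    rw [ENNReal.ofReal_div_of_pos (by norm_num), ENNReal.ofReal_one, ENNReal.ofReal_ofNat]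
  rw [h2, ← ENNReal.ofReal_mul (by norm_num : (0:ℝ) ≤ 1/2),
    ← ENNReal.ofReal_mul (by norm_num : (0:ℝ) ≤ 1/2),
    ← ENNReal.ofReal_mul (by norm_num : (0:ℝ) ≤ 1/2),
    ← ENNReal.ofReal_mul (by norm_num : (0:ℝ) ≤ 1/2),
    ← ENNReal.ofReal_add (by exact mul_nonneg (by norm_num) (cdf_nonneg _))
      (by exact mul_nonneg (by norm_num) (cdf_nonneg _)),
    ← ENNReal.ofReal_add (by exact mul_nonneg (by norm_num) (cdf_nonneg _))
      (by exact mul_nonneg (by norm_num) (cdf_nonneg _))]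
  congr 1
  simp only [mul_one, mul_neg_one, sub_neg_eq_add, ← sub_eq_add_neg]
  rw [Real.sinh_sub, Real.sinh_add, Real.sinh_arsinh, Real.cosh_arsinh]
  have hπ := Real.pi_pos
  linear_combination (1/(2*π)) * arctan_sum_aux x y a
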